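/- arXiv:2409.09943 — 5 statements merged into one kernel-verified Lean document; each statement's English description precedes it below -/
import Mathlib

section
/- For every function f that is integrable on [0,1], one has ∫₀¹ S(f)(x) dx = ∫₀¹ f(x) dx. -/
open MeasureTheory intervalIntegral

/-- The piecewise transformation `T(f)` from the paper: `T(f)(x) = 2 f(2x)` on `[0,1/2]`
and `T(f)(x) = 2 f(2-2x)` on `(1/2,1]`. -/
noncomputable def T (f : ℝ → ℝ) (x : ℝ) : ℝ :=
  if x ≤ 1 / 2 then 2 * f (2 * x) else 2 * f (2 - 2 * x)

/-- The integral operator `S(f)(x) = ∫₀ˣ T(f)(t) dt`. -/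
noncomputable def S (f : ℝ → ℝ) (x : ℝ) : ℝ := ∫ t in (0:ℝ)..x, T f t

/-- For any `f` integrable on `[0,1]`, `∫₀¹ S(f)(x) dx = ∫₀¹ f(x) dx`. -/
theorem integral_Sf (f : ℝ → ℝ) (hf : IntervalIntegrable f volume 0 1) :
    (∫ x in (0:ℝ)..1, S f x) = ∫ x in (0:ℝ)..1, f x := by
  set F : ℝ → ℝ := fun y => ∫ t in (0:ℝ)..y, f t with hFdef
  have h1 : IntervalIntegrable (fun t => 2 * f (2 * t)) volume 0 (1/2) := by
    have := (hf.comp_mul_left (c := 2) enorm_ne_top enorm_ne_top).const_mul 2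
    norm_num at this; exact this
  have h2 : IntervalIntegrable (fun t => 2 * f (2 - 2 * t)) volume (1/2) 1 := by
    have := (((hf.comp_sub_left 2 enorm_ne_top).comp_mul_left (c := 2) enorm_ne_top enorm_ne_top).const_mul 2).symm
    norm_num at this; exact this
  have hT1 : IntervalIntegrable (T f) volume 0 (1/2) := by
    apply h1.congr_ae
    filter_upwards [ae_restrict_mem measurableSet_uIoc] with t ht
    rw [Set.uIoc_of_le (by norm_num : (0:ℝ) ≤ 1/2)] at ht
    simp only [T, if_pos ht.2]
  have hT2 : IntervalIntegrable (T f) volume (1/2) 1 := by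
    apply h2.congr_ae
    filter_upwards [ae_restrict_mem measurableSet_uIoc] with t ht
    rw [Set.uIoc_of_le (by norm_num : (1:ℝ)/2 ≤ 1)] at ht
    simp only [T, if_neg (not_le.2 ht.1)]
  have key1 : ∀ x ∈ Set.Icc (0:ℝ) (1/2), (∫ t in (0:ℝ)..x, T f t) = F (2 * x) := by
    intro x hx
    have hcon : (∫ t in (0:ℝ)..x, T f t) = ∫ t in (0:ℝ)..x, 2 * f (2 * t) := by
      apply integral_congr
      intro t ht
      rw [Set.uIcc_of_le hx.1] at ht
      simp only [T, if_pos (le_trans ht.2 hx.2)]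
    rw [hcon, intervalIntegral.integral_const_mul,
      intervalIntegral.integral_comp_mul_left f (two_ne_zero)]
    simp only [hFdef, smul_eq_mul]
    norm_num
    ring
  have key2 : ∀ x ∈ Set.Icc ((1:ℝ)/2) 1, S f x = 2 * F 1 - F (2 - 2 * x) := by
    intro x hx
    have hT2x : IntervalIntegrable (T f) volume (1/2) x :=
      hT2.mono_set (by rw [Set.uIcc_of_le hx.1, Set.uIcc_of_le (by norm_num)]
                       exact Set.Icc_subset_Icc le_rfl hx.2)
    have hsplit : S f x = (∫ t in (0:ℝ)..(1/2:ℝ), T f t) + ∫ t in (1/2:ℝ)..x, T f t := by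
      simp only [S]
      exact (integral_add_adjacent_intervals hT1 hT2x).symm
    have hc : (∫ t in (1/2:ℝ)..x, T f t) = ∫ t in (1/2:ℝ)..x, 2 * f (2 - 2 * t) := by
      apply intervalIntegral.integral_congr_ae
      apply Filter.Eventually.of_forall
      intro t ht
      rw [Set.uIoc_of_le hx.1] at ht
      simp only [T, if_neg (not_le.2 ht.1)]
    have h2x : (2:ℝ) - 2 * x ∈ Set.Icc (0:ℝ) 1 := by
      constructor <;> nlinarith [hx.1, hx.2]
    have hfa : IntervalIntegrable f volume 0 (2 - 2*x) :=
      hf.mono_set (by rw [Set.uIcc_of_le h2x.1, Set.uIcc_of_le (by norm_num)]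
                      exact Set.Icc_subset_Icc le_rfl h2x.2)
    have hsub := integral_interval_sub_left hf hfa
    have hval : (∫ t in (1/2:ℝ)..x, 2 * f (2 - 2 * t)) = F 1 - F (2 - 2 * x) := by
      rw [intervalIntegral.integral_const_mul,
        intervalIntegral.integral_comp_sub_mul f (two_ne_zero) 2]
      simp only [hFdef, smul_eq_mul]
      rw [show (2:ℝ) - 2 * (1/2) = 1 by norm_num, ← hsub]
      ring
    rw [hsplit, key1 (1/2) (by norm_num), hc, hval]
    rw [show (2:ℝ) * (1/2) = 1 by norm_num]
    ring
  have hFcont : ContinuousOn F (Set.uIcc (0:ℝ) 1) :=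
    continuousOn_primitive_interval' hf Set.left_mem_uIcc
  have hScont : ContinuousOn (S f) (Set.uIcc (0:ℝ) 1) :=
    continuousOn_primitive_interval' (hT1.trans hT2) Set.left_mem_uIcc
  have hSint : IntervalIntegrable (S f) volume 0 1 := hScont.intervalIntegrable
  have hS1 : IntervalIntegrable (S f) volume 0 (1/2) :=
    hSint.mono_set (by rw [Set.uIcc_of_le (by norm_num : (0:ℝ) ≤ 1/2),
      Set.uIcc_of_le (by norm_num : (0:ℝ) ≤ 1)]; exact Set.Icc_subset_Icc le_rfl (by norm_num))
  have hS2 : IntervalIntegrable (S f) volume (1/2) 1 :=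
    hSint.mono_set (by rw [Set.uIcc_of_le (by norm_num : (1:ℝ)/2 ≤ 1),
      Set.uIcc_of_le (by norm_num : (0:ℝ) ≤ 1)]; exact Set.Icc_subset_Icc (by norm_num) le_rfl)
  rw [← integral_add_adjacent_intervals hS1 hS2]
  have e1 : (∫ x in (0:ℝ)..(1/2:ℝ), S f x) = ∫ x in (0:ℝ)..(1/2:ℝ), F (2 * x) := by
    apply integral_congr
    intro x hx
    rw [Set.uIcc_of_le (by norm_num : (0:ℝ) ≤ 1/2)] at hx
    exact key1 x hx
  have e1' : (∫ x in (0:ℝ)..(1/2:ℝ), F (2 * x)) = 2⁻¹ * ∫ y in (0:ℝ)..1, F y := by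
    rw [intervalIntegral.integral_comp_mul_left F (two_ne_zero)]
    norm_num [smul_eq_mul]
  have e2 : (∫ x in (1/2:ℝ)..1, S f x) = ∫ x in (1/2:ℝ)..1, (2 * F 1 - F (2 - 2 * x)) := by
    apply integral_congr
    intro x hx
    rw [Set.uIcc_of_le (by norm_num : (1:ℝ)/2 ≤ 1)] at hx
    exact key2 x hx
  have hFc2 : IntervalIntegrable (fun x => F (2 - 2 * x)) volume (1/2) 1 := by
    apply ContinuousOn.intervalIntegrable
    apply hFcont.comp (by fun_prop : ContinuousOn (fun x : ℝ => 2 - 2 * x) _)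
    intro x hx
    rw [Set.uIcc_of_le (by norm_num : (1:ℝ)/2 ≤ 1)] at hx
    rw [Set.uIcc_of_le (by norm_num : (0:ℝ) ≤ 1)]
    refine ⟨?_, ?_⟩
    · show (0:ℝ) ≤ 2 - 2 * x; linarith [hx.2]
    · show (2:ℝ) - 2 * x ≤ 1; linarith [hx.1]
  have e2' : (∫ x in (1/2:ℝ)..1, (2 * F 1 - F (2 - 2 * x)))
      = F 1 - 2⁻¹ * ∫ y in (0:ℝ)..1, F y := by
    rw [intervalIntegral.integral_sub (intervalIntegrable_const) hFc2,
      intervalIntegral.integral_const, intervalIntegral.integral_comp_sub_mul F two_ne_zero 2]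
    norm_num [smul_eq_mul]
    ring
  rw [e1, e1', e2, e2']
  simp only [hFdef]
  ring
end

section
/- If f is continuous on [L,R] with L < R and ∫_L^R f(x) dx = 0, then max_{x∈[L,R]} |∫_L^x f(t) dt| ≤ (1/2)(R−L)·max_{x∈[L,R]} |f(x)|. -/
open MeasureTheory

/-- If `f` is continuous on `[L,R]` with zero integral, then the maximum of
`|∫_L^x f(t) dt|` over `[L,R]` is at most `(1/2)(R-L)` times the maximum of `|f|`. -/
theorem max_integral_le (L R : ℝ) (hLR : L < R) (f : ℝ → ℝ)
    (hf : ContinuousOn f (Set.Icc L R))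
    (h0 : (∫ x in L..R, f x) = 0) :
    sSup ((fun x => |∫ t in L..x, f t|) '' Set.Icc L R) ≤
      1 / 2 * (R - L) * sSup ((fun x => |f x|) '' Set.Icc L R) := by
  set M := sSup ((fun x => |f x|) '' Set.Icc L R) with hM
  have hLR' : L ≤ R := hLR.le
  have hbdd : BddAbove ((fun x => |f x|) '' Set.Icc L R) :=
    (isCompact_Icc.image_of_continuousOn hf.abs).bddAbove
  have hM0 : 0 ≤ M :=
    le_trans (abs_nonneg (f L)) (le_csSup hbdd ⟨L, ⟨le_refl L, hLR'⟩, rfl⟩)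
  have hMle : ∀ t ∈ Set.Icc L R, |f t| ≤ M := fun t ht => le_csSup hbdd ⟨t, ht, rfl⟩
  apply Real.sSup_le _ (mul_nonneg (by linarith) hM0)
  rintro y ⟨x, hx, rfl⟩
  obtain ⟨hxL, hxR⟩ := hx
  have hxmem : x ∈ Set.Icc L R := ⟨hxL, hxR⟩
  have hLmem : L ∈ Set.Icc L R := ⟨le_refl L, hLR'⟩
  have hRmem : R ∈ Set.Icc L R := ⟨hLR', le_refl R⟩
  have hint : ∀ a b : ℝ, a ∈ Set.Icc L R → b ∈ Set.Icc L R →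
      IntervalIntegrable f volume a b := fun a b ha hb =>
    (hf.mono (Set.uIcc_subset_Icc ha hb)).intervalIntegrable
  have h1 : ‖∫ t in L..x, f t‖ ≤ M * |x - L| := by
    apply intervalIntegral.norm_integral_le_of_norm_le_const
    intro t ht
    exact hMle t (Set.uIcc_subset_Icc hLmem hxmem (Set.uIoc_subset_uIcc ht))
  have h2 : ‖∫ t in x..R, f t‖ ≤ M * |R - x| := by
    apply intervalIntegral.norm_integral_le_of_norm_le_const
    intro t ht
    exact hMle t (Set.uIcc_subset_Icc hxmem hRmem (Set.uIoc_subset_uIcc ht))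
  have hsplit : (∫ t in L..x, f t) + (∫ t in x..R, f t) = 0 := by
    rw [intervalIntegral.integral_add_adjacent_intervals
      (hint L x hLmem hxmem) (hint x R hxmem hRmem), h0]
  have heq : |∫ t in L..x, f t| = |∫ t in x..R, f t| := by
    have : (∫ t in L..x, f t) = -(∫ t in x..R, f t) := by linarith
    rw [this, abs_neg]
  have hax : |x - L| = x - L := abs_of_nonneg (by linarith)
  have haR : |R - x| = R - x := abs_of_nonneg (by linarith)
  rw [Real.norm_eq_abs] at h1 h2
  rw [hax] at h1; rw [haR] at h2
  rw [heq] at h1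
  nlinarith [h1, h2, heq]
end

section
/- If g and h are continuous on [0,1] and ∫₀¹ g(x) dx = ∫₀¹ h(x) dx, then max_{x∈[0,1]} |S(g)(x) − S(h)(x)| = max_{x∈[0,1]} |∫₀ˣ (g(u) − h(u)) du|. -/
open MeasureTheory

lemma S_eq_left (f : ℝ → ℝ) {x : ℝ} (hx0 : 0 ≤ x) (hx : x ≤ 1/2) :
    S f x = ∫ u in (0:ℝ)..(2*x), f u := by
  have h1 : S f x = ∫ t in (0:ℝ)..x, 2 * f (2 * t) := by
    apply intervalIntegral.integral_congr
    intro t ht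
    rw [Set.uIcc_of_le hx0] at ht
    unfold T
    rw [if_pos (le_trans ht.2 hx)]
  rw [h1, intervalIntegral.integral_const_mul]
  rw [intervalIntegral.integral_comp_mul_left (f := f) (c := (2:ℝ)) (by norm_num)]
  norm_num
  ring

lemma S_eq_right (f : ℝ → ℝ) (hf : ContinuousOn f (Set.Icc 0 1)) {x : ℝ}
    (hx0 : 1/2 ≤ x) (hx : x ≤ 1) :
    S f x = 2 * (∫ u in (0:ℝ)..1, f u) - ∫ u in (0:ℝ)..(2 - 2*x), f u := by
  have hc1 : ContinuousOn (fun t => 2 * f (2 * t)) (Set.Icc 0 (1/2)) := by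
    apply ContinuousOn.mul continuousOn_const
    apply hf.comp (continuous_const.mul continuous_id).continuousOn
    intro t ht
    simp only [Pi.mul_apply, Pi.sub_apply, id_eq]
    constructor <;> [linarith [ht.1]; linarith [ht.2]]
  have hc2 : ContinuousOn (fun t => 2 * f (2 - 2 * t)) (Set.Icc (1/2) x) := by
    apply ContinuousOn.mul continuousOn_const
    apply hf.comp (continuous_const.sub (continuous_const.mul continuous_id)).continuousOn
    intro t ht
    simp only [Pi.mul_apply, Pi.sub_apply, id_eq]
    constructor <;> [linarith [ht.2, hx]; linarith [ht.1]]
  have hi1 : IntervalIntegrable (T f) volume 0 (1/2) := by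
    rw [intervalIntegrable_iff_integrableOn_Icc_of_le (by norm_num)]
    apply (hc1.integrableOn_Icc).congr_fun _ measurableSet_Icc
    intro t ht
    unfold T
    rw [if_pos ht.2]
  have hi2 : IntervalIntegrable (T f) volume (1/2) x := by
    rw [intervalIntegrable_iff_integrableOn_Ioc_of_le hx0]
    apply ((hc2.integrableOn_Icc).mono_set Set.Ioc_subset_Icc_self).congr_fun _
      measurableSet_Ioc
    intro t ht
    unfold T
    rw [if_neg (not_le.mpr ht.1)]
  have hsplit : S f x = (∫ t in (0:ℝ)..(1/2), T f t) + ∫ t in (1/2:ℝ)..x, T f t :=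
    (intervalIntegral.integral_add_adjacent_intervals hi1 hi2).symm
  have e1 : (∫ t in (0:ℝ)..(1/2), T f t) = ∫ u in (0:ℝ)..1, f u := by
    have : (∫ t in (0:ℝ)..(1/2), T f t) = ∫ t in (0:ℝ)..(1/2), 2 * f (2 * t) := by
      apply intervalIntegral.integral_congr
      intro t ht
      rw [Set.uIcc_of_le (by norm_num : (0:ℝ) ≤ 1/2)] at ht
      unfold T
      rw [if_pos ht.2]
    rw [this, intervalIntegral.integral_const_mul,
      intervalIntegral.integral_comp_mul_left (f := f) (c := (2:ℝ)) (by norm_num)]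
    norm_num
    ring
  have e2 : (∫ t in (1/2:ℝ)..x, T f t) =
      (∫ u in (0:ℝ)..1, f u) - ∫ u in (0:ℝ)..(2 - 2*x), f u := by
    have step : (∫ t in (1/2:ℝ)..x, T f t) = ∫ t in (1/2:ℝ)..x, 2 * f (2 - 2 * t) := by
      rw [intervalIntegral.integral_of_le hx0, intervalIntegral.integral_of_le hx0]
      apply setIntegral_congr_fun measurableSet_Ioc
      intro t ht
      unfold T
      rw [if_neg (not_le.mpr ht.1)]
    rw [step, intervalIntegral.integral_const_mul,
      intervalIntegral.integral_comp_sub_mul (f := f) (c := (2:ℝ)) (by norm_num) 2]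
    have h21 : (2:ℝ) - 2 * (1/2) = 1 := by norm_num
    rw [h21]
    have hInt1 : IntervalIntegrable f volume 0 1 :=
      hf.intervalIntegrable_of_Icc (by norm_num)
    have hIntc : IntervalIntegrable f volume 0 (2 - 2*x) := by
      apply (hf.mono _).intervalIntegrable
      rw [Set.uIcc_of_le (by linarith)]
      apply Set.Icc_subset_Icc le_rfl
      linarith
    have := intervalIntegral.integral_interval_sub_left hInt1 hIntc
    rw [← this]
    simp [smul_eq_mul]
  rw [hsplit, e1, e2]
  ring

/-- If `g` and `h` are continuous on `[0,1]` with the same integral, then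
`max_{x∈[0,1]} |S(g)(x) − S(h)(x)| = max_{x∈[0,1]} |∫₀ˣ (g(u) − h(u)) du|`. -/
theorem max_S_sub_S (g h : ℝ → ℝ)
    (hg : ContinuousOn g (Set.Icc 0 1)) (hh : ContinuousOn h (Set.Icc 0 1))
    (hint : (∫ x in (0:ℝ)..1, g x) = ∫ x in (0:ℝ)..1, h x) :
    sSup ((fun x => |S g x - S h x|) '' Set.Icc 0 1) =
      sSup ((fun x => |∫ u in (0:ℝ)..x, (g u - h u)|) '' Set.Icc 0 1) := by
  set F : ℝ → ℝ := fun y => ∫ u in (0:ℝ)..y, (g u - h u) with hF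
  have hFsub : ∀ y ∈ Set.Icc (0:ℝ) 1,
      F y = (∫ u in (0:ℝ)..y, g u) - ∫ u in (0:ℝ)..y, h u := by
    intro y hy
    apply intervalIntegral.integral_sub
    · apply (hg.mono _).intervalIntegrable
      rw [Set.uIcc_of_le hy.1]; exact Set.Icc_subset_Icc le_rfl hy.2
    · apply (hh.mono _).intervalIntegrable
      rw [Set.uIcc_of_le hy.1]; exact Set.Icc_subset_Icc le_rfl hy.2
  have key : ∀ x ∈ Set.Icc (0:ℝ) 1,
      |S g x - S h x| = if x ≤ 1/2 then |F (2*x)| else |F (2 - 2*x)| := by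
    intro x hx
    by_cases hx2 : x ≤ 1/2
    · rw [if_pos hx2, S_eq_left g hx.1 hx2, S_eq_left h hx.1 hx2,
        hFsub (2*x) ⟨by linarith [hx.1], by linarith⟩]
    · push_neg at hx2
      rw [if_neg (not_le.mpr hx2), S_eq_right g hg hx2.le hx.2,
        S_eq_right h hh hx2.le hx.2,
        hFsub (2 - 2*x) ⟨by linarith [hx.2], by linarith⟩, hint]
      rw [show 2 * (∫ x in (0:ℝ)..1, h x) - (∫ u in (0:ℝ)..(2-2*x), g u) -
          (2 * (∫ x in (0:ℝ)..1, h x) - ∫ u in (0:ℝ)..(2-2*x), h u)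
        = -((∫ u in (0:ℝ)..(2-2*x), g u) - ∫ u in (0:ℝ)..(2-2*x), h u) by ring,
        abs_neg]
  have himg : (fun x => |S g x - S h x|) '' Set.Icc 0 1
      = (fun y => |F y|) '' Set.Icc 0 1 := by
    apply Set.Subset.antisymm
    · rintro v ⟨x, hx, rfl⟩
      simp only
      rw [key x hx]
      by_cases hx2 : x ≤ 1/2
      · rw [if_pos hx2]
        exact ⟨2*x, ⟨by linarith [hx.1], by linarith⟩, rfl⟩
      · rw [if_neg hx2]
        push_neg at hx2
        exact ⟨2 - 2*x, ⟨by linarith [hx.2], by linarith⟩, rfl⟩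
    · rintro v ⟨y, hy, rfl⟩
      refine ⟨y/2, ⟨by linarith [hy.1], by linarith [hy.2]⟩, ?_⟩
      simp only
      rw [key (y/2) ⟨by linarith [hy.1], by linarith [hy.2]⟩,
        if_pos (by linarith [hy.2])]
      rw [show 2 * (y/2) = y by ring]
  rw [himg]
end

section
/- For each real number A, there exists a unique continuous function f : [0,1] → ℝ with ∫₀¹ f(x) dx = A satisfying f(x) = ∫₀ˣ T(f)(t) dt for all x ∈ [0,1]; equivalently, a unique solution of the self-similar differential equation f′(x) = 2f(2x) on [0,1/2], f′(x) = 2f(2−2x) on (1/2,1], with f(0) = 0 and ∫₀¹ f = A. -/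
open MeasureTheory

namespace SSDE

/-- Extend a continuous function on `[0,1]` to all of `ℝ`. -/
noncomputable def ext (u : C(Set.Icc (0:ℝ) 1, ℝ)) : ℝ → ℝ :=
  Set.IccExtend zero_le_one u

lemma ext_continuous (u : C(Set.Icc (0:ℝ) 1, ℝ)) : Continuous (ext u) :=
  u.continuous.Icc_extend'

lemma ext_apply_mem (u : C(Set.Icc (0:ℝ) 1, ℝ)) {x : ℝ} (hx : x ∈ Set.Icc (0:ℝ) 1) :
    ext u x = u ⟨x, hx⟩ :=
  Set.IccExtend_of_mem _ _ hx

lemma Tf_intable_left {f : ℝ → ℝ} (hf : Continuous f) :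
    IntervalIntegrable (T f) volume 0 (1/2) := by
  have hc : Continuous fun t : ℝ => 2 * f (2 * t) := by continuity
  refine (hc.intervalIntegrable _ _).congr_ae ?_
  rw [Filter.EventuallyEq, ae_restrict_iff' measurableSet_uIoc]
  refine ae_of_all _ fun t ht => ?_
  rw [Set.uIoc_of_le (by norm_num : (0:ℝ) ≤ 1/2)] at ht
  rw [T, if_pos ht.2]

lemma Tf_intable_right {f : ℝ → ℝ} (hf : Continuous f) {x : ℝ} (hx : 1/2 < x) :
    IntervalIntegrable (T f) volume (1/2) x := by
  have hc : Continuous fun t : ℝ => 2 * f (2 - 2 * t) := by continuity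
  refine (hc.intervalIntegrable _ _).congr_ae ?_
  rw [Filter.EventuallyEq, ae_restrict_iff' measurableSet_uIoc]
  refine ae_of_all _ fun t ht => ?_
  rw [Set.uIoc_of_le hx.le] at ht
  rw [T, if_neg (not_le.2 ht.1)]

lemma S_eq {f : ℝ → ℝ} (hf : Continuous f) {x : ℝ} (hx : x ∈ Set.Icc (0:ℝ) 1) :
    (∫ t in (0:ℝ)..x, T f t) =
      if x ≤ 1/2 then ∫ u in (0:ℝ)..2*x, f u
      else 2 * (∫ u in (0:ℝ)..1, f u) - ∫ u in (0:ℝ)..(2-2*x), f u := by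
  obtain ⟨hx0, hx1⟩ := hx
  have key : ∀ y : ℝ, 0 ≤ y → y ≤ 1/2 →
      (∫ t in (0:ℝ)..y, T f t) = ∫ u in (0:ℝ)..2*y, f u := by
    intro y h0 h2
    have h1 : (∫ t in (0:ℝ)..y, T f t) = ∫ t in (0:ℝ)..y, 2 * f (2*t) := by
      refine intervalIntegral.integral_congr fun t ht => ?_
      rw [Set.uIcc_of_le h0] at ht
      rw [T, if_pos (ht.2.trans h2)]
    rw [h1, intervalIntegral.integral_const_mul]
    have h3 := intervalIntegral.mul_integral_comp_mul_left (a := 0) (b := y) (f := f) (c := 2)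
    simpa using h3
  split_ifs with h
  · exact key x hx0 h
  · push_neg at h
    have i1 := Tf_intable_left hf
    have i2 := Tf_intable_right hf h
    rw [← intervalIntegral.integral_add_adjacent_intervals i1 i2]
    have e1 : (∫ t in (0:ℝ)..(1/2:ℝ), T f t) = ∫ u in (0:ℝ)..1, f u := by
      have h4 := key (1/2) (by norm_num) le_rfl
      norm_num at h4
      exact h4
    have e2 : (∫ t in (1/2:ℝ)..x, T f t)
        = (∫ u in (0:ℝ)..1, f u) - ∫ u in (0:ℝ)..(2-2*x), f u := by
      have h1 : (∫ t in (1/2:ℝ)..x, T f t) = ∫ t in (1/2:ℝ)..x, 2 * f (2 - 2*t) := by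
        refine intervalIntegral.integral_congr_ae (ae_of_all _ fun t ht => ?_)
        rw [Set.uIoc_of_le h.le] at ht
        rw [T, if_neg (not_le.2 ht.1)]
      have h3 := intervalIntegral.mul_integral_comp_sub_mul (a := 1/2) (b := x) (f := f) (c := 2) (d := 2)
      have h5 : (2:ℝ) - 2*(1/2) = 1 := by norm_num
      rw [h5] at h3
      rw [h1, intervalIntegral.integral_const_mul, h3]
      rw [← intervalIntegral.integral_interval_sub_left (hf.intervalIntegrable _ _)
        (hf.intervalIntegrable _ _)]
    rw [e1, e2]; ring

lemma int_S_eq {f : ℝ → ℝ} (hf : Continuous f) :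
    (∫ x in (0:ℝ)..1, (∫ t in (0:ℝ)..x, T f t)) = ∫ t in (0:ℝ)..1, f t := by
  set F : ℝ → ℝ := fun y => ∫ t in (0:ℝ)..y, f t with hFdef
  have hF : Continuous F :=
    intervalIntegral.continuous_primitive (fun a b => hf.intervalIntegrable a b) 0
  set G : ℝ → ℝ := fun x => if x ≤ 1/2 then F (2*x) else 2 * F 1 - F (2-2*x) with hGdef
  have hF2 : Continuous fun x : ℝ => F (2*x) := hF.comp (by continuity)
  have hF2' : Continuous fun x : ℝ => F (2-2*x) := hF.comp (by continuity)
  have hG : Continuous G := by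
    refine Continuous.if_le hF2 (by continuity) continuous_id continuous_const ?_
    intro x hx
    rw [hx, show (2:ℝ)*(1/2) = 1 by norm_num, show (2:ℝ)-1 = 1 by norm_num]
    ring
  have congrG : (∫ x in (0:ℝ)..1, (∫ t in (0:ℝ)..x, T f t)) = ∫ x in (0:ℝ)..1, G x := by
    refine intervalIntegral.integral_congr fun x hx => ?_
    rw [Set.uIcc_of_le zero_le_one] at hx
    exact S_eq hf hx
  rw [congrG, ← intervalIntegral.integral_add_adjacent_intervals
    (hG.intervalIntegrable 0 (1/2)) (hG.intervalIntegrable (1/2) 1)]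
  have p1 : (∫ x in (0:ℝ)..(1/2:ℝ), G x) = ∫ x in (0:ℝ)..(1/2:ℝ), F (2*x) := by
    refine intervalIntegral.integral_congr fun x hx => ?_
    rw [Set.uIcc_of_le (by norm_num : (0:ℝ) ≤ 1/2)] at hx
    rw [hGdef]
    exact if_pos hx.2
  have p2 : (∫ x in (1/2:ℝ)..1, G x) = ∫ x in (1/2:ℝ)..1, (2 * F 1 - F (2-2*x)) := by
    refine intervalIntegral.integral_congr fun x hx => ?_
    rw [Set.uIcc_of_le (by norm_num : (1/2:ℝ) ≤ 1)] at hx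
    rw [hGdef]
    simp only
    split_ifs with hx2
    · have : x = 1/2 := le_antisymm hx2 hx.1
      rw [this, show (2:ℝ)*(1/2) = 1 by norm_num, show (2:ℝ)-1 = 1 by norm_num]
      ring
    · rfl
  have q1 : 2 * (∫ x in (0:ℝ)..(1/2:ℝ), F (2*x)) = ∫ u in (0:ℝ)..1, F u := by
    have h3 := intervalIntegral.mul_integral_comp_mul_left
      (a := 0) (b := 1/2) (f := F) (c := 2)
    rw [show (2:ℝ)*(1/2) = 1 by norm_num, show (2:ℝ)*0 = 0 by norm_num] at h3
    exact h3
  have q2 : 2 * (∫ x in (1/2:ℝ)..1, F (2-2*x)) = ∫ u in (0:ℝ)..1, F u := by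
    have h3 := intervalIntegral.mul_integral_comp_sub_mul
      (a := 1/2) (b := 1) (f := F) (c := 2) (d := 2)
    rw [show (2:ℝ)-2*1 = 0 by norm_num, show (2:ℝ)-2*(1/2) = 1 by norm_num] at h3
    exact h3
  have r2 : (∫ x in (1/2:ℝ)..1, (2 * F 1 - F (2-2*x)))
      = (2 * F 1) * (1 - 1/2) - ∫ x in (1/2:ℝ)..1, F (2-2*x) := by
    rw [intervalIntegral.integral_sub (intervalIntegrable_const)
      (hF2'.intervalIntegrable _ _), intervalIntegral.integral_const]
    simp [mul_comm]
  have : F 1 = ∫ t in (0:ℝ)..1, f t := rfl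
  rw [p1, p2, r2]
  linarith

lemma S_continuousOn {f : ℝ → ℝ} (hf : Continuous f) :
    ContinuousOn (fun x => ∫ t in (0:ℝ)..x, T f t) (Set.Icc 0 1) := by
  set F : ℝ → ℝ := fun y => ∫ t in (0:ℝ)..y, f t with hFdef
  have hF : Continuous F :=
    intervalIntegral.continuous_primitive (fun a b => hf.intervalIntegrable a b) 0
  set G : ℝ → ℝ := fun x => if x ≤ 1/2 then F (2*x) else 2 * F 1 - F (2-2*x) with hGdef
  have hF2 : Continuous fun x : ℝ => F (2*x) := hF.comp (by continuity)
  have hF2' : Continuous fun x : ℝ => F (2-2*x) := hF.comp (by continuity)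
  have hG : Continuous G := by
    refine Continuous.if_le hF2 (continuous_const.sub hF2') continuous_id continuous_const ?_
    intro x hx
    rw [hx, show (2:ℝ)*(1/2) = 1 by norm_num, show (2:ℝ)-1 = 1 by norm_num]
    ring
  refine hG.continuousOn.congr fun x hx => ?_
  rw [S_eq hf hx, hGdef]

/-- The integrated transformation as a map on `C([0,1], ℝ)`. -/
noncomputable def Smap (u : C(Set.Icc (0:ℝ) 1, ℝ)) : C(Set.Icc (0:ℝ) 1, ℝ) where
  toFun := (Set.Icc (0:ℝ) 1).restrict fun x => ∫ t in (0:ℝ)..x, T (ext u) t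
  continuous_toFun := (S_continuousOn (ext_continuous u)).restrict

lemma Smap_apply (u : C(Set.Icc (0:ℝ) 1, ℝ)) (p : Set.Icc (0:ℝ) 1) :
    Smap u p = ∫ t in (0:ℝ)..(p:ℝ), T (ext u) t := rfl

lemma int_ext_Smap (u : C(Set.Icc (0:ℝ) 1, ℝ)) :
    (∫ x in (0:ℝ)..1, ext (Smap u) x) = ∫ x in (0:ℝ)..1, ext u x := by
  have h1 : (∫ x in (0:ℝ)..1, ext (Smap u) x)
      = ∫ x in (0:ℝ)..1, (∫ t in (0:ℝ)..x, T (ext u) t) := by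
    refine intervalIntegral.integral_congr fun x hx => ?_
    rw [Set.uIcc_of_le zero_le_one] at hx
    rw [ext_apply_mem _ hx]
    rfl
  rw [h1, int_S_eq (ext_continuous u)]

lemma ext_dist_le (u v : C(Set.Icc (0:ℝ) 1, ℝ)) (t : ℝ) :
    ‖ext u t - ext v t‖ ≤ dist u v := by
  rw [show ‖ext u t - ext v t‖ = dist (ext u t) (ext v t) from (dist_eq_norm _ _).symm]
  exact ContinuousMap.dist_apply_le_dist _

lemma half_bound {h : ℝ → ℝ} (hh : Continuous h) (hint : (∫ t in (0:ℝ)..1, h t) = 0)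
    {d : ℝ} (hd : ∀ t : ℝ, ‖h t‖ ≤ d) {y : ℝ} (hy : y ∈ Set.Icc (0:ℝ) 1) :
    |∫ t in (0:ℝ)..y, h t| ≤ 1/2 * d := by
  obtain ⟨hy0, hy1⟩ := hy
  have hd0 : 0 ≤ d := le_trans (norm_nonneg _) (hd 0)
  by_cases hc : y ≤ 1/2
  · have hle := intervalIntegral.norm_integral_le_of_norm_le_const
      (a := 0) (b := y) (C := d) (fun t _ => hd t)
    rw [Real.norm_eq_abs, show |y - 0| = y from by rw [sub_zero, abs_of_nonneg hy0]] at hle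
    nlinarith
  · push_neg at hc
    have e : (∫ t in (0:ℝ)..y, h t) = -(∫ t in y..1, h t) := by
      have h2 := intervalIntegral.integral_interval_sub_left
        (hh.intervalIntegrable (μ := volume) 0 1) (hh.intervalIntegrable (μ := volume) 0 y)
      rw [hint] at h2
      linarith
    rw [e, abs_neg]
    have hle := intervalIntegral.norm_integral_le_of_norm_le_const
      (a := y) (b := 1) (C := d) (fun t _ => hd t)
    rw [Real.norm_eq_abs, show |1 - y| = 1 - y from abs_of_nonneg (by linarith)] at hle
    nlinarith

lemma Smap_contract {u v : C(Set.Icc (0:ℝ) 1, ℝ)}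
    (huv : (∫ x in (0:ℝ)..1, ext u x) = ∫ x in (0:ℝ)..1, ext v x) :
    dist (Smap u) (Smap v) ≤ 1/2 * dist u v := by
  have hu := ext_continuous u
  have hv := ext_continuous v
  have hh : Continuous fun t => ext u t - ext v t := hu.sub hv
  have hint : (∫ t in (0:ℝ)..1, (ext u t - ext v t)) = 0 := by
    rw [intervalIntegral.integral_sub (hu.intervalIntegrable _ _)
      (hv.intervalIntegrable _ _), huv, sub_self]
  have key : ∀ y ∈ Set.Icc (0:ℝ) 1,
      |(∫ t in (0:ℝ)..y, ext u t) - ∫ t in (0:ℝ)..y, ext v t| ≤ 1/2 * dist u v := by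
    intro y hy
    rw [← intervalIntegral.integral_sub (hu.intervalIntegrable _ _)
      (hv.intervalIntegrable _ _)]
    exact half_bound hh hint (fun t => ext_dist_le u v t) hy
  refine (ContinuousMap.dist_le (by positivity)).2 fun p => ?_
  obtain ⟨x, hx⟩ := p
  rw [Real.dist_eq, Smap_apply, Smap_apply]
  rw [S_eq hu hx, S_eq hv hx]
  obtain ⟨hx0, hx1⟩ := hx
  split_ifs with hhalf
  · exact key (2*x) ⟨by linarith, by linarith⟩
  · push_neg at hhalf
    have e : (2 * (∫ u_1 in (0:ℝ)..1, ext u u_1) - ∫ u_1 in (0:ℝ)..(2-2*x), ext u u_1)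
        - (2 * (∫ u_1 in (0:ℝ)..1, ext v u_1) - ∫ u_1 in (0:ℝ)..(2-2*x), ext v u_1)
        = -((∫ t in (0:ℝ)..(2-2*x), ext u t) - ∫ t in (0:ℝ)..(2-2*x), ext v t) := by
      rw [huv]; ring
    rw [e, abs_neg]
    exact key (2-2*x) ⟨by linarith, by linarith⟩

end SSDE

/-- For each real `A` there is a unique continuous `f` on `[0,1]` with `∫₀¹ f = A`
satisfying `f(x) = ∫₀ˣ T(f)(t) dt` on `[0,1]` (the SSDE `f' = T(f)`, `f(0) = 0`),
uniqueness being up to equality on `[0,1]`. -/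
theorem exists_unique_ssde_solution (A : ℝ) :
    ∃ f : ℝ → ℝ,
      (ContinuousOn f (Set.Icc 0 1) ∧ (∫ x in (0:ℝ)..1, f x) = A ∧
        ∀ x ∈ Set.Icc (0:ℝ) 1, f x = ∫ t in (0:ℝ)..x, T f t) ∧
      ∀ g : ℝ → ℝ,
        (ContinuousOn g (Set.Icc 0 1) ∧ (∫ x in (0:ℝ)..1, g x) = A ∧
          ∀ x ∈ Set.Icc (0:ℝ) 1, g x = ∫ t in (0:ℝ)..x, T g t) →
        Set.EqOn g f (Set.Icc 0 1) := by
  classical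
  set X : Set C(Set.Icc (0:ℝ) 1, ℝ) :=
    {u | (∫ x in (0:ℝ)..1, SSDE.ext u x) = A} with hXdef
  have hcont : Continuous fun u : C(Set.Icc (0:ℝ) 1, ℝ) =>
      ∫ x in (0:ℝ)..1, SSDE.ext u x := by
    refine (LipschitzWith.of_dist_le_mul (K := 1) fun u v => ?_).continuous
    rw [Real.dist_eq, NNReal.coe_one, one_mul,
      ← intervalIntegral.integral_sub
        ((SSDE.ext_continuous u).intervalIntegrable _ _)
        ((SSDE.ext_continuous v).intervalIntegrable _ _)]
    have hle := intervalIntegral.norm_integral_le_of_norm_le_const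
      (a := 0) (b := 1) (C := dist u v) (fun t _ => SSDE.ext_dist_le u v t)
    rw [Real.norm_eq_abs] at hle
    simpa using hle
  have hXclosed : IsClosed X := isClosed_eq hcont continuous_const
  haveI : CompleteSpace X := hXclosed.completeSpace_coe
  haveI : Nonempty X := ⟨⟨ContinuousMap.const _ A, by
    have h1 : (∫ x in (0:ℝ)..1, SSDE.ext (ContinuousMap.const _ A) x)
        = ∫ x in (0:ℝ)..1, (A : ℝ) := rfl
    show (∫ x in (0:ℝ)..1, SSDE.ext (ContinuousMap.const _ A) x) = A
    rw [h1, intervalIntegral.integral_const]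
    simp⟩⟩
  set Φ : X → X := fun u => ⟨SSDE.Smap u.1, by
    show (∫ x in (0:ℝ)..1, SSDE.ext (SSDE.Smap u.1) x) = A
    rw [SSDE.int_ext_Smap]
    exact u.2⟩ with hΦdef
  have hΦ : ContractingWith (1/2 : NNReal) Φ := by
    constructor
    · exact_mod_cast (by norm_num : ((1:NNReal)/2 : ℝ) < 1)
    · refine LipschitzWith.of_dist_le_mul fun u v => ?_
      have hc := SSDE.Smap_contract (u := u.1) (v := v.1) (by rw [u.2, v.2])
      rw [Subtype.dist_eq, Subtype.dist_eq]
      calc dist (SSDE.Smap u.1) (SSDE.Smap v.1) ≤ 1/2 * dist u.1 v.1 := hc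
        _ = ((1/2 : NNReal) : ℝ) * dist u.1 v.1 := by push_cast; ring
  set u : X := ContractingWith.fixedPoint Φ hΦ with hudef
  have hufix : Φ u = u := hΦ.fixedPoint_isFixedPt
  have hSfix : SSDE.Smap u.1 = u.1 := congrArg Subtype.val hufix
  refine ⟨SSDE.ext u.1, ⟨(SSDE.ext_continuous u.1).continuousOn, u.2, ?_⟩, ?_⟩
  · intro x hx
    have h1 : SSDE.ext u.1 x = u.1 ⟨x, hx⟩ := SSDE.ext_apply_mem u.1 hx
    exact h1.trans ((ContinuousMap.congr_fun hSfix ⟨x, hx⟩).symm.trans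
      (SSDE.Smap_apply u.1 ⟨x, hx⟩))
  · rintro g ⟨hgc, hgA, hgeq⟩
    set v : C(Set.Icc (0:ℝ) 1, ℝ) := ⟨(Set.Icc (0:ℝ) 1).restrict g, hgc.restrict⟩
      with hvdef
    have hvx : ∀ x (hx : x ∈ Set.Icc (0:ℝ) 1), SSDE.ext v x = g x := fun x hx =>
      SSDE.ext_apply_mem v hx
    have hvint : (∫ x in (0:ℝ)..1, SSDE.ext v x) = ∫ x in (0:ℝ)..1, g x := by
      refine intervalIntegral.integral_congr fun x hx => ?_
      rw [Set.uIcc_of_le zero_le_one] at hx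
      exact hvx x hx
    have hvX : v ∈ X := by
      show (∫ x in (0:ℝ)..1, SSDE.ext v x) = A
      rw [hvint, hgA]
    have hfixv : Φ ⟨v, hvX⟩ = ⟨v, hvX⟩ := by
      apply Subtype.ext
      apply ContinuousMap.ext
      rintro ⟨x, hx⟩
      show (∫ t in (0:ℝ)..x, T (SSDE.ext v) t) = g x
      have h2 : (∫ t in (0:ℝ)..x, T (SSDE.ext v) t) = ∫ t in (0:ℝ)..x, T g t := by
        refine intervalIntegral.integral_congr fun t ht => ?_
        rw [Set.uIcc_of_le hx.1] at ht
        unfold T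
        split_ifs with h3
        · rw [hvx (2*t) ⟨by linarith [ht.1], by linarith⟩]
        · push_neg at h3
          rw [hvx (2-2*t) ⟨by linarith [ht.2, hx.2], by linarith⟩]
      rw [h2]
      exact (hgeq x hx).symm
    have huniq : (⟨v, hvX⟩ : X) = u := hΦ.fixedPoint_unique hfixv
    intro x hx
    have h4 : g x = v ⟨x, hx⟩ := rfl
    rw [h4, show v = u.1 from congrArg Subtype.val huniq, SSDE.ext_apply_mem u.1 hx]
end

section
/- Let x₀ < x₁ < ⋯ < xₙ, let y₀ ∈ ℝ, and let P be a linear piecemealing with data (a_i, d_i, e_i, f_i) satisfying Σ_{i=1}^{n} (a_i³ d_i)/|a_i| = 0. If g and h are continuous on [x₀,xₙ] with ∫_{x₀}^{xₙ} g(x) dx = ∫_{x₀}^{xₙ} h(x) dx, then F_{y₀}(g)(x_k) = F_{y₀}(h)(x_k) for every k = 1,…,n, and consequently for x ∈ [x_{i−1}, x_i], F_{y₀}(g)(x) − F_{y₀}(h)(x) = a_i d_i · ∫_{(x_{i−1}−e_i)/a_i}^{(x−e_i)/a_i} (g(u) − h(u)) du. -/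
open MeasureTheory

/-- From the proof of Theorem 10 of the paper: if `Σ aᵢ³dᵢ/|aᵢ| = 0` and `g`, `h` are
continuous on `[x₀,xₙ]` with equal integrals, then `F_{y₀}(g)(x_k) = F_{y₀}(h)(x_k)` for
`k = 1,…,n`, and for `x ∈ [x_{i-1}, x_i]`,
`F_{y₀}(g)(x) − F_{y₀}(h)(x) = aᵢ dᵢ ∫_{(x_{i−1}−eᵢ)/aᵢ}^{(x−eᵢ)/aᵢ} (g − h)`. -/
theorem fractal_transform_difference (n : ℕ) (hn : 1 ≤ n)
    (x a d e f : ℕ → ℝ)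
    (hx : ∀ j < n, x j < x (j + 1))
    (ha : ∀ i ∈ Finset.Icc 1 n, a i ≠ 0)
    (hmap : ∀ i ∈ Finset.Icc 1 n,
      (0 < a i → a i = (x i - x (i - 1)) / (x n - x 0) ∧ e i = x i - a i * x n) ∧
      (a i < 0 → a i = (x (i - 1) - x i) / (x n - x 0) ∧ e i = x i - a i * x 0))
    (hsum : ∑ i ∈ Finset.Icc 1 n, a i ^ 3 * d i / |a i| = 0)
    (y₀ : ℝ) (g h Pg Ph : ℝ → ℝ)
    (hg : ContinuousOn g (Set.Icc (x 0) (x n)))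
    (hh : ContinuousOn h (Set.Icc (x 0) (x n)))
    (hint : (∫ z in (x 0)..(x n), g z) = ∫ z in (x 0)..(x n), h z)
    (hPg : ∀ i ∈ Finset.Icc 1 n, ∀ z ∈ Set.Ico (x (i - 1)) (x i),
      Pg z = d i * g ((z - e i) / a i) + f i)
    (hPh : ∀ i ∈ Finset.Icc 1 n, ∀ z ∈ Set.Ico (x (i - 1)) (x i),
      Ph z = d i * h ((z - e i) / a i) + f i) :
    (∀ k ∈ Finset.Icc 1 n,
      y₀ + (∫ t in (x 0)..(x k), Pg t) = y₀ + ∫ t in (x 0)..(x k), Ph t) ∧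
    ∀ i ∈ Finset.Icc 1 n, ∀ z ∈ Set.Icc (x (i - 1)) (x i),
      (y₀ + ∫ t in (x 0)..z, Pg t) - (y₀ + ∫ t in (x 0)..z, Ph t) =
        a i * d i * ∫ u in ((x (i - 1) - e i) / a i)..((z - e i) / a i), (g u - h u) := by
  -- monotonicity
  have hmono : ∀ j k : ℕ, j ≤ k → k ≤ n → x j ≤ x k := by
    intro j k hjk hkn
    induction k with
    | zero => simp [Nat.le_zero.mp hjk]
    | succ m ih =>
      rcases Nat.eq_or_lt_of_le hjk with rfl | hlt
      · exact le_refl _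
      · exact le_trans (ih (by omega) (by omega)) (hx m (by omega)).le
  have hL : x 0 < x n := by
    have h1 := hx (n - 1) (by omega)
    have h2 : n - 1 + 1 = n := by omega
    rw [h2] at h1
    exact lt_of_le_of_lt (hmono 0 (n - 1) (by omega) (by omega)) h1
  have hLne : x n - x 0 ≠ 0 := by linarith
  have hpq : ∀ i ∈ Finset.Icc 1 n, x (i - 1) < x i := by
    intro i hi
    obtain ⟨h1, h2⟩ := Finset.mem_Icc.mp hi
    have := hx (i - 1) (by omega)
    rwa [Nat.sub_add_cancel h1] at this
  -- endpoints of the affine maps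
  have hendpos : ∀ i ∈ Finset.Icc 1 n, 0 < a i →
      (x (i - 1) - e i) / a i = x 0 ∧ (x i - e i) / a i = x n := by
    intro i hi hpos
    obtain ⟨hav, hev⟩ := (hmap i hi).1 hpos
    have ha' := ha i hi
    constructor
    · rw [div_eq_iff ha', hev]
      have : a i * (x n - x 0) = x i - x (i - 1) := by
        rw [hav]; field_simp
      nlinarith [this]
    · rw [div_eq_iff ha', hev]; ring
  have hendneg : ∀ i ∈ Finset.Icc 1 n, a i < 0 →
      (x (i - 1) - e i) / a i = x n ∧ (x i - e i) / a i = x 0 := by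
    intro i hi hneg
    obtain ⟨hav, hev⟩ := (hmap i hi).2 hneg
    have ha' := ha i hi
    constructor
    · rw [div_eq_iff ha', hev]
      have : a i * (x n - x 0) = x (i - 1) - x i := by
        rw [hav]; field_simp
      nlinarith [this]
    · rw [div_eq_iff ha', hev]; ring
  -- the affine map sends the piece into [x 0, x n]
  have hmaps : ∀ i ∈ Finset.Icc 1 n, ∀ t ∈ Set.Icc (x (i - 1)) (x i),
      (t - e i) / a i ∈ Set.Icc (x 0) (x n) := by
    intro i hi t ht
    rcases (ha i hi).lt_or_gt with hneg | hpos
    · obtain ⟨h1, h2⟩ := hendneg i hi hneg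
      constructor
      · rw [← h2]; exact (div_le_div_right_of_neg hneg).mpr (by linarith [ht.2])
      · rw [← h1]; exact (div_le_div_right_of_neg hneg).mpr (by linarith [ht.1])
    · obtain ⟨h1, h2⟩ := hendpos i hi hpos
      constructor
      · rw [← h1]; exact (div_le_div_iff_of_pos_right hpos).mpr (by linarith [ht.1])
      · rw [← h2]; exact (div_le_div_iff_of_pos_right hpos).mpr (by linarith [ht.2])
  -- key substitution lemma on each piece
  have keyB : ∀ i ∈ Finset.Icc 1 n, ∀ z ∈ Set.Icc (x (i - 1)) (x i),
      (∫ t in (x (i - 1))..z, Pg t) - (∫ t in (x (i - 1))..z, Ph t) =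
        a i * d i * ∫ u in ((x (i - 1) - e i) / a i)..((z - e i) / a i), (g u - h u) := by
    intro i hi z hz
    have ha' := ha i hi
    have hpz : x (i - 1) ≤ z := hz.1
    have hzq : z ≤ x i := hz.2
    have haq : ∀ᵐ t : ℝ, t ≠ x i := by
      rw [ae_iff]
      have : {t : ℝ | ¬t ≠ x i} = {x i} := by ext t; simp
      rw [this]; exact measure_singleton _
    have hcongrg : (∫ t in (x (i - 1))..z, Pg t) =
        ∫ t in (x (i - 1))..z, (d i * g ((t - e i) / a i) + f i) := by
      apply intervalIntegral.integral_congr_ae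
      filter_upwards [haq] with t htq ht
      rw [Set.uIoc_of_le hpz] at ht
      exact hPg i hi t ⟨ht.1.le, lt_of_le_of_ne (le_trans ht.2 hzq) htq⟩
    have hcongrh : (∫ t in (x (i - 1))..z, Ph t) =
        ∫ t in (x (i - 1))..z, (d i * h ((t - e i) / a i) + f i) := by
      apply intervalIntegral.integral_congr_ae
      filter_upwards [haq] with t htq ht
      rw [Set.uIoc_of_le hpz] at ht
      exact hPh i hi t ⟨ht.1.le, lt_of_le_of_ne (le_trans ht.2 hzq) htq⟩
    have hmaps' : Set.MapsTo (fun t => (t - e i) / a i) (Set.Icc (x (i - 1)) z)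
        (Set.Icc (x 0) (x n)) := by
      intro t ht
      exact hmaps i hi t ⟨ht.1, le_trans ht.2 hzq⟩
    have hcl : ContinuousOn (fun t : ℝ => (t - e i) / a i) (Set.Icc (x (i - 1)) z) :=
      (continuousOn_id.sub continuousOn_const).div_const _
    have hig : IntervalIntegrable (fun t => d i * g ((t - e i) / a i) + f i)
        volume (x (i - 1)) z := by
      apply ContinuousOn.intervalIntegrable
      rw [Set.uIcc_of_le hpz]
      exact (continuousOn_const.mul (hg.comp hcl hmaps')).add continuousOn_const
    have hih : IntervalIntegrable (fun t => d i * h ((t - e i) / a i) + f i)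
        volume (x (i - 1)) z := by
      apply ContinuousOn.intervalIntegrable
      rw [Set.uIcc_of_le hpz]
      exact (continuousOn_const.mul (hh.comp hcl hmaps')).add continuousOn_const
    rw [hcongrg, hcongrh, ← intervalIntegral.integral_sub hig hih]
    have : (fun t => (d i * g ((t - e i) / a i) + f i) - (d i * h ((t - e i) / a i) + f i)) =
        fun t => d i * ((fun u => g u - h u) (t / a i - e i / a i)) := by
      funext t
      rw [sub_div]
      ring
    rw [this, intervalIntegral.integral_const_mul,
      intervalIntegral.integral_comp_div_sub (fun u => g u - h u) ha']
    rw [smul_eq_mul, sub_div, sub_div]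
    ring
  -- each full piece contributes zero difference
  have hintgh : (∫ u in (x 0)..(x n), (g u - h u)) = 0 := by
    rw [intervalIntegral.integral_sub
      (ContinuousOn.intervalIntegrable (by rw [Set.uIcc_of_le hL.le]; exact hg))
      (ContinuousOn.intervalIntegrable (by rw [Set.uIcc_of_le hL.le]; exact hh)), hint, sub_self]
  have keyC : ∀ i ∈ Finset.Icc 1 n,
      (∫ t in (x (i - 1))..(x i), Pg t) = ∫ t in (x (i - 1))..(x i), Ph t := by
    intro i hi
    have hz : x i ∈ Set.Icc (x (i - 1)) (x i) := ⟨(hpq i hi).le, le_refl _⟩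
    have hB := keyB i hi (x i) hz
    rcases (ha i hi).lt_or_gt with hneg | hpos
    · obtain ⟨h1, h2⟩ := hendneg i hi hneg
      rw [h1, h2, intervalIntegral.integral_symm (x 0) (x n), hintgh] at hB
      simp at hB
      linarith [hB]
    · obtain ⟨h1, h2⟩ := hendpos i hi hpos
      rw [h1, h2, hintgh] at hB
      simp at hB
      linarith [hB]
  -- integrability of Pg, Ph on pieces
  have hintP : ∀ (P G : ℝ → ℝ), ContinuousOn G (Set.Icc (x 0) (x n)) →
      (∀ i ∈ Finset.Icc 1 n, ∀ z ∈ Set.Ico (x (i - 1)) (x i),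
        P z = d i * G ((z - e i) / a i) + f i) →
      ∀ i ∈ Finset.Icc 1 n, IntervalIntegrable P volume (x (i - 1)) (x i) := by
    intro P G hG hPG i hi
    have hpq' := hpq i hi
    have hmaps' : Set.MapsTo (fun t => (t - e i) / a i) (Set.Icc (x (i - 1)) (x i))
        (Set.Icc (x 0) (x n)) := fun t ht => hmaps i hi t ht
    have hcl : ContinuousOn (fun t : ℝ => (t - e i) / a i) (Set.Icc (x (i - 1)) (x i)) :=
      (continuousOn_id.sub continuousOn_const).div_const _
    have hiG : IntervalIntegrable (fun t => d i * G ((t - e i) / a i) + f i)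
        volume (x (i - 1)) (x i) := by
      apply ContinuousOn.intervalIntegrable
      rw [Set.uIcc_of_le hpq'.le]
      exact (continuousOn_const.mul (hG.comp hcl hmaps')).add continuousOn_const
    have haq : ∀ᵐ t : ℝ, t ≠ x i := by
      rw [ae_iff]
      have : {t : ℝ | ¬t ≠ x i} = {x i} := by ext t; simp
      rw [this]; exact measure_singleton _
    apply IntervalIntegrable.congr_ae hiG
    apply (ae_restrict_iff' measurableSet_uIoc).2
    filter_upwards [haq] with t htq ht
    rw [Set.uIoc_of_le hpq'.le] at ht
    exact (hPG i hi t ⟨ht.1.le, lt_of_le_of_ne ht.2 htq⟩).symm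
  have hiPg : ∀ i ∈ Finset.Icc 1 n, IntervalIntegrable Pg volume (x (i - 1)) (x i) :=
    hintP Pg g hg hPg
  have hiPh : ∀ i ∈ Finset.Icc 1 n, IntervalIntegrable Ph volume (x (i - 1)) (x i) :=
    hintP Ph h hh hPh
  have hInt0 : ∀ k, k ≤ n → IntervalIntegrable Pg volume (x 0) (x k) ∧
      IntervalIntegrable Ph volume (x 0) (x k) := by
    intro k hk
    induction k with
    | zero => exact ⟨IntervalIntegrable.refl, IntervalIntegrable.refl⟩
    | succ m ih =>
      have him : m + 1 ∈ Finset.Icc 1 n := Finset.mem_Icc.mpr ⟨by omega, hk⟩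
      have e1 : m + 1 - 1 = m := rfl
      have h1 := hiPg (m + 1) him
      have h2 := hiPh (m + 1) him
      rw [e1] at h1 h2
      exact ⟨(ih (by omega)).1.trans h1, (ih (by omega)).2.trans h2⟩
  have claim1 : ∀ k, k ≤ n → (∫ t in (x 0)..(x k), Pg t) = ∫ t in (x 0)..(x k), Ph t := by
    intro k hk
    induction k with
    | zero => simp
    | succ m ih =>
      have him : m + 1 ∈ Finset.Icc 1 n := Finset.mem_Icc.mpr ⟨by omega, hk⟩
      have e1 : m + 1 - 1 = m := rfl
      have h1 := hiPg (m + 1) him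
      have h2 := hiPh (m + 1) him
      rw [e1] at h1 h2
      have hC := keyC (m + 1) him
      rw [e1] at hC
      rw [← intervalIntegral.integral_add_adjacent_intervals (hInt0 m (by omega)).1 h1,
        ← intervalIntegral.integral_add_adjacent_intervals (hInt0 m (by omega)).2 h2,
        ih (by omega), hC]
  refine ⟨?_, ?_⟩
  · intro k hk
    rw [claim1 k (Finset.mem_Icc.mp hk).2]
  · intro i hi z hz
    obtain ⟨hi1, hin⟩ := Finset.mem_Icc.mp hi
    have hsub : Set.uIcc (x (i - 1)) z ⊆ Set.uIcc (x (i - 1)) (x i) := by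
      rw [Set.uIcc_of_le hz.1, Set.uIcc_of_le (hpq i hi).le]
      exact Set.Icc_subset_Icc_right hz.2
    have hPgz : IntervalIntegrable Pg volume (x (i - 1)) z := (hiPg i hi).mono_set hsub
    have hPhz : IntervalIntegrable Ph volume (x (i - 1)) z := (hiPh i hi).mono_set hsub
    rw [← intervalIntegral.integral_add_adjacent_intervals (hInt0 (i - 1) (by omega)).1 hPgz,
      ← intervalIntegral.integral_add_adjacent_intervals (hInt0 (i - 1) (by omega)).2 hPhz]
    have hA := claim1 (i - 1) (by omega)
    have hB := keyB i hi z hz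
    linarith [hA, hB]
end
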